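/- Let P, P̂ ∈ ℝ^{S×S} be row-stochastic matrices such that for every x the support of the row P(x,·) is contained in the support of P̂(x,·), let γ ∈ [0,1) and r ∈ ℝ^S, and set V := (I − γP)⁻¹ r and V̂ := (I − γP̂)⁻¹ r. Then ‖V − V̂‖∞ ≤ (γ/(1−γ))·‖(P − P̂)V‖∞ ≤ (γ√2/(1−γ)) · (max_{x∈S} √(KL(P(x,·)‖P̂(x,·)))) · ‖V‖∞. -/

import Mathlib

open Finset Matrix

/-- Supremum norm of a vector indexed by a finite type. -/
noncomputable def supNorm {S : Type*} [Fintype S] (v : S → ℝ) : ℝ := ⨆ x, |v x|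

/-- KL divergence of finitely supported probability vectors,
with the convention `0 * log 0 = 0` (automatic since `Real.log 0 = 0`). -/
noncomputable def KLfin {S : Type*} [Fintype S] (p q : S → ℝ) : ℝ :=
  ∑ y, p y * Real.log (p y / q y)

section SupNormAux

variable {S : Type*} [Fintype S] [Nonempty S]

lemma abs_le_supNorm (v : S → ℝ) (x : S) : |v x| ≤ supNorm v := by
  show |v x| ≤ ⨆ x, |v x|
  exact le_ciSup (Set.Finite.bddAbove (Set.finite_range fun x => |v x|)) x

lemma supNorm_le {v : S → ℝ} {c : ℝ} (h : ∀ x, |v x| ≤ c) : supNorm v ≤ c := by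
  show (⨆ x, |v x|) ≤ c
  exact ciSup_le h

lemma supNorm_nonneg (v : S → ℝ) : 0 ≤ supNorm v :=
  le_trans (abs_nonneg _) (abs_le_supNorm v (Classical.arbitrary S))

end SupNormAux

section PinskerAux

/-- derivative of `G x = (x+1) log x - 2(x-1)` -/
lemma G_hasDeriv {x : ℝ} (hx : 0 < x) :
    HasDerivAt (fun x : ℝ => (x + 1) * Real.log x - 2 * (x - 1))
      (Real.log x + 1 / x - 1) x := by
  have h1 : HasDerivAt (fun x : ℝ => (x + 1) * Real.log x)
      (1 * Real.log x + (x + 1) * x⁻¹) x :=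
    ((hasDerivAt_id x).add_const 1).mul (Real.hasDerivAt_log hx.ne')
  have h2 : HasDerivAt (fun x : ℝ => 2 * (x - 1)) 2 x := by
    simpa using ((hasDerivAt_id x).sub_const 1).const_mul (2 : ℝ)
  refine (h1.sub h2).congr_deriv ?_
  field_simp
  ring

lemma G_mono : MonotoneOn (fun x : ℝ => (x + 1) * Real.log x - 2 * (x - 1)) (Set.Ioi 0) := by
  apply monotoneOn_of_hasDerivWithinAt_nonneg (f' := fun x => Real.log x + 1 / x - 1)
    (convex_Ioi 0)
  · intro x hx
    exact (G_hasDeriv hx).continuousAt.continuousWithinAt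
  · intro x hx
    rw [interior_Ioi] at hx
    exact (G_hasDeriv hx).hasDerivWithinAt
  · intro x hx
    rw [interior_Ioi] at hx
    have := Real.one_sub_inv_le_log_of_pos hx
    rw [inv_eq_one_div] at this
    linarith

lemma G_nonneg {x : ℝ} (hx : 1 ≤ x) : 0 ≤ (x + 1) * Real.log x - 2 * (x - 1) := by
  have := G_mono (Set.mem_Ioi.2 one_pos) (Set.mem_Ioi.2 (lt_of_lt_of_le one_pos hx)) hx
  simpa [Real.log_one] using this

lemma G_nonpos {x : ℝ} (hx0 : 0 < x) (hx : x ≤ 1) :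
    (x + 1) * Real.log x - 2 * (x - 1) ≤ 0 := by
  have := G_mono (Set.mem_Ioi.2 hx0) (Set.mem_Ioi.2 one_pos) hx
  simpa [Real.log_one] using this

lemma F_hasDeriv {x : ℝ} (hx : 0 < x) :
    HasDerivAt (fun x : ℝ => (2 * x + 4) * (x * Real.log x - x + 1) - 3 * (x - 1) ^ 2)
      (4 * ((x + 1) * Real.log x - 2 * (x - 1))) x := by
  have hxl : HasDerivAt (fun x : ℝ => x * Real.log x - x + 1) (Real.log x) x := by
    have h := (Real.hasDerivAt_mul_log hx.ne').sub (hasDerivAt_id x)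
    have h' := h.add_const 1
    simpa using h'
  have h1 : HasDerivAt (fun x : ℝ => 2 * x + 4) 2 x := by
    simpa using ((hasDerivAt_id x).const_mul (2 : ℝ)).add_const 4
  have h2 := h1.mul hxl
  have h3 : HasDerivAt (fun x : ℝ => 3 * (x - 1) ^ 2) (3 * (2 * (x - 1))) x := by
    have := (((hasDerivAt_id x).sub_const 1).pow 2).const_mul (3 : ℝ)
    simpa using this
  refine (h2.sub h3).congr_deriv ?_
  ring

lemma F_nonneg {x : ℝ} (hx : 0 ≤ x) :
    3 * (x - 1) ^ 2 ≤ (2 * x + 4) * (x * Real.log x - x + 1) := by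
  rcases eq_or_lt_of_le hx with h0 | h0
  · rw [← h0]
    norm_num [Real.log_zero]
  set F := fun x : ℝ => (2 * x + 4) * (x * Real.log x - x + 1) - 3 * (x - 1) ^ 2 with hF
  suffices h : 0 ≤ F x by
    simp only [hF] at h
    linarith
  have hF1 : F 1 = 0 := by simp [hF, Real.log_one]
  rcases le_total x 1 with hx1 | hx1
  · have hanti : AntitoneOn F (Set.Ioc 0 1) := by
      apply antitoneOn_of_hasDerivWithinAt_nonpos
        (f' := fun x => 4 * ((x + 1) * Real.log x - 2 * (x - 1))) (convex_Ioc 0 1)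
      · intro y hy
        exact (F_hasDeriv hy.1).continuousAt.continuousWithinAt
      · intro y hy
        rw [interior_Ioc] at hy
        exact (F_hasDeriv hy.1).hasDerivWithinAt
      · intro y hy
        rw [interior_Ioc] at hy
        have := G_nonpos hy.1 hy.2.le
        linarith
    have := hanti (Set.mem_Ioc.2 ⟨h0, hx1⟩) (Set.mem_Ioc.2 ⟨one_pos, le_refl 1⟩) hx1
    linarith
  · have hmono : MonotoneOn F (Set.Ici 1) := by
      apply monotoneOn_of_hasDerivWithinAt_nonneg
        (f' := fun x => 4 * ((x + 1) * Real.log x - 2 * (x - 1))) (convex_Ici 1)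
      · intro y hy
        exact (F_hasDeriv (lt_of_lt_of_le one_pos hy)).continuousAt.continuousWithinAt
      · intro y hy
        rw [interior_Ici] at hy
        exact (F_hasDeriv (lt_trans one_pos hy)).hasDerivWithinAt
      · intro y hy
        rw [interior_Ici] at hy
        have := G_nonneg hy.le
        linarith
    have := hmono (Set.mem_Ici.2 (le_refl 1)) (Set.mem_Ici.2 hx1) hx1
    linarith

lemma pinsker_pointwise {p q : ℝ} (hp : 0 ≤ p) (hq : 0 ≤ q) (h : q = 0 → p = 0) :
    3 * (p - q) ^ 2 ≤ (2 * p + 4 * q) * (p * Real.log (p / q) - p + q) := by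
  rcases eq_or_lt_of_le hq with h0 | h0
  · rw [← h0, h h0.symm]
    norm_num
  · have hqne : q ≠ 0 := h0.ne'
    have key := F_nonneg (div_nonneg hp h0.le)
    have key2 := mul_le_mul_of_nonneg_left key (sq_nonneg q)
    have e1 : q ^ 2 * (3 * (p / q - 1) ^ 2) = 3 * (p - q) ^ 2 := by
      field_simp
      try ring
    have e2 : q ^ 2 * ((2 * (p / q) + 4) * ((p / q) * Real.log (p / q) - (p / q) + 1)) =
        (2 * p + 4 * q) * (p * Real.log (p / q) - p + q) := by
      field_simp
      try ring
    rw [e1, e2] at key2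
    exact key2

lemma pinsker_l1 {S : Type*} [Fintype S] (p q : S → ℝ)
    (hp0 : ∀ y, 0 ≤ p y) (hq0 : ∀ y, 0 ≤ q y)
    (hp1 : ∑ y, p y = 1) (hq1 : ∑ y, q y = 1)
    (hsupp : ∀ y, q y = 0 → p y = 0) :
    ∑ y, |p y - q y| ≤ Real.sqrt (2 * KLfin p q) := by
  set D := fun y => p y * Real.log (p y / q y) - p y + q y with hD
  have hKL : KLfin p q = ∑ y, D y := by
    simp only [KLfin, hD]
    rw [Finset.sum_add_distrib, Finset.sum_sub_distrib, hp1, hq1]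
    ring
  set w := fun y => 2 * p y + 4 * q y with hw
  have hpw : ∀ y, 3 * (p y - q y) ^ 2 ≤ w y * D y := fun y =>
    pinsker_pointwise (hp0 y) (hq0 y) (hsupp y)
  have hw0 : ∀ y, 0 ≤ w y := fun y => by
    have := hp0 y; have := hq0 y; simp only [hw]; linarith
  have hwzero : ∀ y, w y = 0 → p y = 0 ∧ q y = 0 := by
    intro y hy
    have h1 := hp0 y; have h2 := hq0 y
    simp only [hw] at hy
    constructor <;> linarith
  have hDnn : ∀ y, 0 ≤ D y := by
    intro y
    rcases eq_or_lt_of_le (hw0 y) with h0 | h0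
    · obtain ⟨hpy, hqy⟩ := hwzero y h0.symm
      simp [hD, hpy, hqy]
    · have h1 : 0 ≤ w y * D y := le_trans (by positivity) (hpw y)
      have h2 := div_nonneg h1 h0.le
      rwa [mul_div_cancel_left₀ _ h0.ne'] at h2
  have hsumw : ∑ y, w y = 6 := by
    simp only [hw]
    rw [Finset.sum_add_distrib, ← Finset.mul_sum, ← Finset.mul_sum, hp1, hq1]
    norm_num
  have key := Finset.sum_mul_sq_le_sq_mul_sq Finset.univ
    (fun y => |p y - q y| / Real.sqrt (w y)) (fun y => Real.sqrt (w y))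
  have hfg : ∀ y : S, |p y - q y| / Real.sqrt (w y) * Real.sqrt (w y) = |p y - q y| := by
    intro y
    rcases eq_or_lt_of_le (hw0 y) with h0 | h0
    · obtain ⟨hpy, hqy⟩ := hwzero y h0.symm
      simp [hpy, hqy]
    · rw [div_mul_cancel₀]
      exact (Real.sqrt_pos.2 h0).ne'
  have hf2 : ∀ y : S, (|p y - q y| / Real.sqrt (w y)) ^ 2 ≤ D y / 3 := by
    intro y
    rcases eq_or_lt_of_le (hw0 y) with h0 | h0
    · obtain ⟨hpy, hqy⟩ := hwzero y h0.symm
      have hz : |p y - q y| = 0 := by rw [hpy, hqy]; simp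
      rw [hz]
      simpa using div_nonneg (hDnn y) (by norm_num : (0:ℝ) ≤ 3)
    · rw [div_pow, sq_abs, Real.sq_sqrt (hw0 y)]
      rw [div_le_div_iff₀ h0 (by norm_num : (0:ℝ) < 3)]
      linarith [hpw y, mul_comm (w y) (D y)]
  have hsum2 : ∑ y, (Real.sqrt (w y)) ^ 2 = 6 := by
    rw [show (∑ y, (Real.sqrt (w y)) ^ 2) = ∑ y, w y from
      Finset.sum_congr rfl fun y _ => Real.sq_sqrt (hw0 y), hsumw]
  have hfinal : (∑ y, |p y - q y|) ^ 2 ≤ 2 * KLfin p q := by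
    have h1 : (∑ y, |p y - q y|) ^ 2 ≤
        (∑ y, (|p y - q y| / Real.sqrt (w y)) ^ 2) * ∑ y, (Real.sqrt (w y)) ^ 2 := by
      calc (∑ y, |p y - q y|) ^ 2
          = (∑ y, |p y - q y| / Real.sqrt (w y) * Real.sqrt (w y)) ^ 2 := by
            rw [Finset.sum_congr rfl fun y _ => (hfg y).symm]
        _ ≤ _ := key
    have h2 : (∑ y, (|p y - q y| / Real.sqrt (w y)) ^ 2) ≤ KLfin p q / 3 := by
      rw [hKL, Finset.sum_div]
      exact Finset.sum_le_sum fun y _ => hf2 y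
    have h3 : (0:ℝ) ≤ KLfin p q := by
      rw [hKL]; exact Finset.sum_nonneg fun y _ => hDnn y
    calc (∑ y, |p y - q y|) ^ 2
        ≤ (∑ y, (|p y - q y| / Real.sqrt (w y)) ^ 2) * ∑ y, (Real.sqrt (w y)) ^ 2 := h1
      _ = (∑ y, (|p y - q y| / Real.sqrt (w y)) ^ 2) * 6 := by rw [hsum2]
      _ ≤ (KLfin p q / 3) * 6 := by
          apply mul_le_mul_of_nonneg_right h2; norm_num
      _ = 2 * KLfin p q := by ring
  have hnn : 0 ≤ ∑ y, |p y - q y| := Finset.sum_nonneg fun y _ => abs_nonneg _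
  calc ∑ y, |p y - q y| = Real.sqrt ((∑ y, |p y - q y|) ^ 2) := (Real.sqrt_sq hnn).symm
    _ ≤ Real.sqrt (2 * KLfin p q) := Real.sqrt_le_sqrt hfinal

end PinskerAux

section MatrixAux

lemma stochastic_isUnit {S : Type*} [Fintype S] [Nonempty S] [DecidableEq S]
    (M : Matrix S S ℝ) (hM0 : ∀ x y, 0 ≤ M x y) (hM1 : ∀ x, ∑ y, M x y = 1)
    {γ : ℝ} (hγ0 : 0 ≤ γ) (hγ1 : γ < 1) :
    IsUnit ((1 : Matrix S S ℝ) - γ • M).det := by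
  rw [isUnit_iff_ne_zero]
  intro hdet
  obtain ⟨v, hv, hmv⟩ := (Matrix.exists_mulVec_eq_zero_iff).2 hdet
  have hexp : ((1 : Matrix S S ℝ) - γ • M) *ᵥ v = v - γ • (M *ᵥ v) := by
    rw [Matrix.sub_mulVec, Matrix.one_mulVec, Matrix.smul_mulVec]
  rw [hexp] at hmv
  have hmv' : v = γ • (M *ᵥ v) := sub_eq_zero.mp hmv
  have hveq : ∀ x, v x = γ * ∑ y, M x y * v y := by
    intro x
    have h := congrFun hmv' x
    simpa [Matrix.mulVec, dotProduct] using h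
  obtain ⟨x₀, -, hx₀⟩ := Finset.exists_max_image Finset.univ (fun x => |v x|)
    ⟨Classical.arbitrary S, Finset.mem_univ _⟩
  have hvx₀ : 0 < |v x₀| := by
    obtain ⟨x, hx⟩ := Function.ne_iff.1 hv
    exact lt_of_lt_of_le (abs_pos.2 hx) (hx₀ x (Finset.mem_univ x))
  have hbound : |v x₀| ≤ γ * |v x₀| := by
    calc |v x₀| = γ * |∑ y, M x₀ y * v y| := by
          rw [hveq x₀, abs_mul, abs_of_nonneg hγ0]
      _ ≤ γ * ∑ y, M x₀ y * |v y| := by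
          apply mul_le_mul_of_nonneg_left _ hγ0
          refine le_trans (Finset.abs_sum_le_sum_abs _ _) ?_
          apply Finset.sum_le_sum
          intro y _
          rw [abs_mul, abs_of_nonneg (hM0 x₀ y)]
      _ ≤ γ * ∑ y, M x₀ y * |v x₀| := by
          apply mul_le_mul_of_nonneg_left _ hγ0
          exact Finset.sum_le_sum fun y _ =>
            mul_le_mul_of_nonneg_left (hx₀ y (Finset.mem_univ y)) (hM0 x₀ y)
      _ = γ * |v x₀| := by rw [← Finset.sum_mul, hM1, one_mul]
  nlinarith

end MatrixAux

theorem stmt2 {S : Type*} [Fintype S] [Nonempty S] [DecidableEq S]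
    (P Phat : Matrix S S ℝ) (γ : ℝ)
    (hP0 : ∀ x y, 0 ≤ P x y) (hP1 : ∀ x, ∑ y, P x y = 1)
    (hPhat0 : ∀ x y, 0 ≤ Phat x y) (hPhat1 : ∀ x, ∑ y, Phat x y = 1)
    (hsupp : ∀ x y, Phat x y = 0 → P x y = 0)
    (hγ0 : 0 ≤ γ) (hγ1 : γ < 1)
    (r V Vhat : S → ℝ)
    (hV : V = ((1 : Matrix S S ℝ) - γ • P)⁻¹.mulVec r)
    (hVhat : Vhat = ((1 : Matrix S S ℝ) - γ • Phat)⁻¹.mulVec r) :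
    supNorm (fun x => V x - Vhat x) ≤ (γ / (1 - γ)) * supNorm ((P - Phat).mulVec V) ∧
      (γ / (1 - γ)) * supNorm ((P - Phat).mulVec V) ≤
        (γ * Real.sqrt 2 / (1 - γ)) *
          (⨆ x, Real.sqrt (KLfin (fun y => P x y) (fun y => Phat x y))) * supNorm V := by
  have h1γ : 0 < 1 - γ := by linarith
  have hPunit := stochastic_isUnit P hP0 hP1 hγ0 hγ1
  have hPhunit := stochastic_isUnit Phat hPhat0 hPhat1 hγ0 hγ1
  -- A V = r and Ahat Vhat = r
  have hAV : ((1 : Matrix S S ℝ) - γ • P).mulVec V = r := by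
    rw [hV, Matrix.mulVec_mulVec, Matrix.mul_nonsing_inv _ hPunit, Matrix.one_mulVec]
  have hAhVh : ((1 : Matrix S S ℝ) - γ • Phat).mulVec Vhat = r := by
    rw [hVhat, Matrix.mulVec_mulVec, Matrix.mul_nonsing_inv _ hPhunit, Matrix.one_mulVec]
  rw [show ((1 : Matrix S S ℝ) - γ • P) *ᵥ V = V - γ • (P *ᵥ V) by
    rw [Matrix.sub_mulVec, Matrix.one_mulVec, Matrix.smul_mulVec]] at hAV
  have hAVx : ∀ x, V x - γ * ∑ y, P x y * V y = r x := by
    intro x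
    have h := congrFun hAV x
    simpa [Matrix.mulVec, dotProduct] using h
  rw [show ((1 : Matrix S S ℝ) - γ • Phat) *ᵥ Vhat = Vhat - γ • (Phat *ᵥ Vhat) by
    rw [Matrix.sub_mulVec, Matrix.one_mulVec, Matrix.smul_mulVec]] at hAhVh
  have hAhVhx : ∀ x, Vhat x - γ * ∑ y, Phat x y * Vhat y = r x := by
    intro x
    have h := congrFun hAhVh x
    simpa [Matrix.mulVec, dotProduct] using h
  set w := (P - Phat).mulVec V with hwdef
  have hwx : ∀ x, w x = ∑ y, (P x y - Phat x y) * V y := by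
    intro x
    simp only [hwdef, Matrix.mulVec, dotProduct, Matrix.sub_apply]
  set Δ := fun x => V x - Vhat x with hΔdef
  have hkey : ∀ x, Δ x = γ * (∑ y, Phat x y * Δ y) + γ * w x := by
    intro x
    have h1 := hAVx x
    have h2 := hAhVhx x
    have hsplit : ∑ y, P x y * V y =
        (∑ y, (P x y - Phat x y) * V y) + ∑ y, Phat x y * V y := by
      rw [← Finset.sum_add_distrib]
      exact Finset.sum_congr rfl fun y _ => by ring
    have hsplit2 : ∑ y, Phat x y * V y =
        (∑ y, Phat x y * (V y - Vhat y)) + ∑ y, Phat x y * Vhat y := by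
      rw [← Finset.sum_add_distrib]
      exact Finset.sum_congr rfl fun y _ => by ring
    simp only [hΔdef]
    linear_combination h1 - h2 + γ * hsplit + γ * hsplit2 - γ * (hwx x)
  -- Part 1
  have habs : ∀ x, |Δ x| ≤ γ * supNorm Δ + γ * supNorm w := by
    intro x
    rw [hkey x]
    calc |γ * (∑ y, Phat x y * Δ y) + γ * w x|
        ≤ |γ * (∑ y, Phat x y * Δ y)| + |γ * w x| := abs_add_le _ _
      _ = γ * |∑ y, Phat x y * Δ y| + γ * |w x| := by
          rw [abs_mul, abs_mul, abs_of_nonneg hγ0]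
      _ ≤ γ * supNorm Δ + γ * supNorm w := by
          apply add_le_add
          · apply mul_le_mul_of_nonneg_left _ hγ0
            calc |∑ y, Phat x y * Δ y| ≤ ∑ y, |Phat x y * Δ y| :=
                  Finset.abs_sum_le_sum_abs _ _
              _ = ∑ y, Phat x y * |Δ y| := Finset.sum_congr rfl fun y _ => by
                  rw [abs_mul, abs_of_nonneg (hPhat0 x y)]
              _ ≤ ∑ y, Phat x y * supNorm Δ := Finset.sum_le_sum fun y _ =>
                  mul_le_mul_of_nonneg_left (abs_le_supNorm Δ y) (hPhat0 x y)
              _ = supNorm Δ := by rw [← Finset.sum_mul, hPhat1, one_mul]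
          · exact mul_le_mul_of_nonneg_left (abs_le_supNorm w x) hγ0
  have hΔle : supNorm Δ ≤ γ * supNorm Δ + γ * supNorm w := supNorm_le habs
  have part1 : supNorm Δ ≤ (γ / (1 - γ)) * supNorm w := by
    rw [div_mul_eq_mul_div, le_div_iff₀ h1γ]
    nlinarith [supNorm_nonneg Δ, supNorm_nonneg w]
  refine ⟨part1, ?_⟩
  -- Part 2
  set K := ⨆ x, Real.sqrt (KLfin (fun y => P x y) (fun y => Phat x y)) with hK
  have hKle : ∀ x, Real.sqrt (KLfin (fun y => P x y) (fun y => Phat x y)) ≤ K := by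
    intro x
    rw [hK]
    exact le_ciSup (Set.Finite.bddAbove (Set.finite_range
      fun x => Real.sqrt (KLfin (fun y => P x y) (fun y => Phat x y)))) x
  have hrow : ∀ x, |w x| ≤ Real.sqrt 2 * K * supNorm V := by
    intro x
    have hl1 : ∑ y, |P x y - Phat x y| ≤
        Real.sqrt (2 * KLfin (fun y => P x y) (fun y => Phat x y)) :=
      pinsker_l1 _ _ (fun y => hP0 x y) (fun y => hPhat0 x y) (hP1 x) (hPhat1 x)
        (fun y => hsupp x y)
    have hsq : Real.sqrt (2 * KLfin (fun y => P x y) (fun y => Phat x y)) =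
        Real.sqrt 2 * Real.sqrt (KLfin (fun y => P x y) (fun y => Phat x y)) :=
      Real.sqrt_mul (by norm_num) _
    calc |w x| = |∑ y, (P x y - Phat x y) * V y| := by rw [hwx x]
      _ ≤ ∑ y, |(P x y - Phat x y) * V y| := Finset.abs_sum_le_sum_abs _ _
      _ = ∑ y, |P x y - Phat x y| * |V y| := Finset.sum_congr rfl fun y _ => abs_mul _ _
      _ ≤ ∑ y, |P x y - Phat x y| * supNorm V := Finset.sum_le_sum fun y _ =>
          mul_le_mul_of_nonneg_left (abs_le_supNorm V y) (abs_nonneg _)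
      _ = (∑ y, |P x y - Phat x y|) * supNorm V := (Finset.sum_mul _ _ _).symm
      _ ≤ Real.sqrt (2 * KLfin (fun y => P x y) (fun y => Phat x y)) * supNorm V :=
          mul_le_mul_of_nonneg_right hl1 (supNorm_nonneg V)
      _ = Real.sqrt 2 * Real.sqrt (KLfin (fun y => P x y) (fun y => Phat x y)) *
            supNorm V := by rw [hsq]
      _ ≤ Real.sqrt 2 * K * supNorm V := by
          apply mul_le_mul_of_nonneg_right _ (supNorm_nonneg V)
          exact mul_le_mul_of_nonneg_left (hKle x) (Real.sqrt_nonneg 2)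
  have hwle : supNorm w ≤ Real.sqrt 2 * K * supNorm V := supNorm_le hrow
  calc (γ / (1 - γ)) * supNorm w
      ≤ (γ / (1 - γ)) * (Real.sqrt 2 * K * supNorm V) :=
        mul_le_mul_of_nonneg_left hwle (div_nonneg hγ0 h1γ.le)
    _ = (γ * Real.sqrt 2 / (1 - γ)) * K * supNorm V := by ring
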